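/- Let μ^Σ be an eigenmeasure of the open shift with decay rate Λ such that μ^Σ(Σ ∖ Σ'') = 0 and μ^Σ({ε : ε_n = 2 for all n ≤ −1}) = 0 (the latter condition guaranteeing that J_r takes values in [0,1)² μ^Σ-almost everywhere). Then the push-forward μ := (J_r)_* μ^Σ is a probability measure on [0,1)² and is an eigenmeasure of the open baker B_r with decay rate Λ. -/

import Mathlib

open MeasureTheory
open scoped ENNReal

/-- The two-sided shift on `Σ = {0,1,2}^ℤ`. -/
def shiftMap (ε : ℤ → Fin 3) : ℤ → Fin 3 := fun n => ε (n + 1)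

/-- The partition points `α₀ = 0`, `α₁ = r₀`, `α₂ = r₀ + r₁`. -/
def alphaOf (r : Fin 3 → ℝ) : Fin 3 → ℝ := ![0, r 0, r 0 + r 1]

/-- The closed baker's map `B̂_r` on the square `[0,1)²` (extended arbitrarily to `ℝ²`). -/
noncomputable def bakerMap (r : Fin 3 → ℝ) : ℝ × ℝ → ℝ × ℝ := fun x =>
  if x.1 < r 0 then (x.1 / r 0, r 0 * x.2)
  else if x.1 < r 0 + r 1 then ((x.1 - r 0) / r 1, r 1 * x.2 + r 0)
  else ((x.1 - (r 0 + r 1)) / r 2, r 2 * x.2 + (r 0 + r 1))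

/-- The coding map `J_r : Σ → [0,1]²`. -/
noncomputable def codingMap (r : Fin 3 → ℝ) (ε : ℤ → Fin 3) : ℝ × ℝ :=
  (∑' k : ℕ, (∏ i ∈ Finset.range k, r (ε (i : ℤ))) * alphaOf r (ε (k : ℤ)),
   ∑' k : ℕ, (∏ i ∈ Finset.range k, r (ε (-(i + 1) : ℤ))) * alphaOf r (ε (-(k + 1) : ℤ)))

/-- The unit square `[0,1) × [0,1)`. -/
def unitSquare : Set (ℝ × ℝ) := Set.Ico 0 1 ×ˢ Set.Ico 0 1

/-- The hole `H = [r₀, 1-r₂) × [0,1)` of the open baker's map. -/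
def bakerHole (r : Fin 3 → ℝ) : Set (ℝ × ℝ) := Set.Ico (r 0) (1 - r 2) ×ˢ Set.Ico 0 1

/-- The complement `Σ \ Σ''` of the good set `Σ''`. -/
def badSet : Set (ℤ → Fin 3) :=
  {ε | (∀ n : ℤ, n ≤ -1 → ε n = 2) ∧ ε 0 ≠ 1} ∪ {ε | ∀ n : ℤ, 1 ≤ n → ε n = 2}

set_option linter.unusedSectionVars false
set_option linter.unusedTactic false
set_option linter.unreachableTactic false
set_option linter.unusedVariables false
set_option linter.unnecessarySeqFocus false

noncomputable def Fcode (r : Fin 3 → ℝ) (s : ℕ → Fin 3) : ℝ :=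
  ∑' k : ℕ, (∏ i ∈ Finset.range k, r (s i)) * alphaOf r (s k)

lemma fin3_cases (e : Fin 3) : e = 0 ∨ e = 1 ∨ e = 2 := by fin_cases e <;> simp

section basic
variable {r : Fin 3 → ℝ} (hr : ∀ i, 0 < r i) (hsum : r 0 + r 1 + r 2 = 1)

lemma alpha_zero : alphaOf r 0 = 0 := rfl
lemma alpha_one : alphaOf r 1 = r 0 := rfl
lemma alpha_two : alphaOf r 2 = r 0 + r 1 := rfl

include hr in
lemma alpha_nonneg (e : Fin 3) : 0 ≤ alphaOf r e := by
  have h0 := hr 0; have h1 := hr 1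
  rcases fin3_cases e with h | h | h <;> subst h <;>
    simp only [alpha_zero, alpha_one, alpha_two] <;> linarith

include hr hsum in
lemma alpha_add_le (e : Fin 3) : alphaOf r e + r e ≤ 1 := by
  have h0 := hr 0; have h1 := hr 1; have h2 := hr 2
  rcases fin3_cases e with h | h | h <;> subst h <;>
    simp only [alpha_zero, alpha_one, alpha_two] <;> linarith

include hr hsum in
lemma alpha_add_lt {e : Fin 3} (he : e ≠ 2) : alphaOf r e + r e < 1 := by
  have h0 := hr 0; have h1 := hr 1; have h2 := hr 2
  rcases fin3_cases e with h | h | h <;> subst h <;>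
    simp only [alpha_zero, alpha_one, alpha_two] at * <;> first | linarith | simp at he

include hr hsum in
lemma alpha_le_one (e : Fin 3) : alphaOf r e ≤ 1 := by
  have := alpha_add_le hr hsum e; have := hr e; linarith

include hr hsum in
lemma summable_Fcode (s : ℕ → Fin 3) :
    Summable (fun k => (∏ i ∈ Finset.range k, r (s i)) * alphaOf r (s k)) := by
  set c := max (max (r 0) (r 1)) (r 2) with hc
  have h0 := hr 0; have h1 := hr 1; have h2 := hr 2
  have hc0 : 0 < c := lt_of_lt_of_le h2 (le_max_right _ _)
  have hrc : ∀ e : Fin 3, r e ≤ c := by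
    intro e
    rcases fin3_cases e with h | h | h <;> subst h
    · exact le_trans (le_max_left _ _) (le_max_left _ _)
    · exact le_trans (le_max_right _ _) (le_max_left _ _)
    · exact le_max_right _ _
  have hc1 : c < 1 := by
    refine max_lt (max_lt ?_ ?_) ?_ <;> linarith
  refine Summable.of_nonneg_of_le (fun k => ?_) (fun k => ?_)
    (summable_geometric_of_lt_one hc0.le hc1)
  · exact mul_nonneg (Finset.prod_nonneg fun i _ => (hr _).le) (alpha_nonneg hr _)
  · calc (∏ i ∈ Finset.range k, r (s i)) * alphaOf r (s k)
        ≤ (∏ _i ∈ Finset.range k, c) * 1 :=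
          mul_le_mul (Finset.prod_le_prod (fun i _ => (hr _).le) (fun i _ => hrc _))
            (alpha_le_one hr hsum _) (alpha_nonneg hr _)
            (Finset.prod_nonneg fun _ _ => hc0.le)
      _ = c ^ k := by rw [Finset.prod_const, Finset.card_range, mul_one]

include hr hsum in
lemma partial_le (s : ℕ → Fin 3) (n : ℕ) :
    (∑ k ∈ Finset.range n, (∏ i ∈ Finset.range k, r (s i)) * alphaOf r (s k))
      + (∏ i ∈ Finset.range n, r (s i)) ≤ 1 := by
  induction n with
  | zero => simp
  | succ n ih =>
    rw [Finset.sum_range_succ, Finset.prod_range_succ]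
    have hP : 0 ≤ ∏ i ∈ Finset.range n, r (s i) := Finset.prod_nonneg fun i _ => (hr _).le
    have ha := alpha_add_le hr hsum (s n)
    nlinarith [mul_le_mul_of_nonneg_left ha hP]

include hr in
lemma Fcode_nonneg (s : ℕ → Fin 3) : 0 ≤ Fcode r s :=
  tsum_nonneg fun k => mul_nonneg (Finset.prod_nonneg fun i _ => (hr _).le) (alpha_nonneg hr _)

include hr hsum in
lemma Fcode_le_one (s : ℕ → Fin 3) : Fcode r s ≤ 1 := by
  refine Real.tsum_le_of_sum_range_le
    (fun k => mul_nonneg (Finset.prod_nonneg fun i _ => (hr _).le) (alpha_nonneg hr _))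
    (fun n => ?_)
  have := partial_le hr hsum s n
  have hP : 0 ≤ ∏ i ∈ Finset.range n, r (s i) := Finset.prod_nonneg fun i _ => (hr _).le
  linarith

include hr hsum in
lemma Fcode_le_partial (s : ℕ → Fin 3) (n : ℕ) :
    Fcode r s ≤ (∑ k ∈ Finset.range n, (∏ i ∈ Finset.range k, r (s i)) * alphaOf r (s k))
      + ∏ i ∈ Finset.range n, r (s i) := by
  have hs := summable_Fcode hr hsum s
  rw [Fcode, ← Summable.sum_add_tsum_nat_add n hs]
  have hP : 0 ≤ ∏ i ∈ Finset.range n, r (s i) := Finset.prod_nonneg fun i _ => (hr _).le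
  gcongr
  have htail : (∑' k : ℕ, (∏ i ∈ Finset.range (k + n), r (s i)) * alphaOf r (s (k + n)))
      = (∏ i ∈ Finset.range n, r (s i)) * Fcode r (fun j => s (n + j)) := by
    rw [Fcode, ← tsum_mul_left]
    refine tsum_congr fun k => ?_
    rw [add_comm k n, Finset.prod_range_add]
    ring
  rw [htail]
  calc (∏ i ∈ Finset.range n, r (s i)) * Fcode r (fun j => s (n + j))
      ≤ (∏ i ∈ Finset.range n, r (s i)) * 1 :=
        mul_le_mul_of_nonneg_left (Fcode_le_one hr hsum _) hP
    _ = _ := mul_one _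

include hr hsum in
lemma Fcode_lt_one {s : ℕ → Fin 3} {m : ℕ} (hm : s m ≠ 2) : Fcode r s < 1 := by
  have h := Fcode_le_partial hr hsum s (m + 1)
  rw [Finset.sum_range_succ, Finset.prod_range_succ] at h
  have hp := partial_le hr hsum s m
  have hPpos : 0 < ∏ i ∈ Finset.range m, r (s i) := Finset.prod_pos fun i _ => hr _
  have ha := alpha_add_lt hr hsum hm
  nlinarith [mul_lt_mul_of_pos_left ha hPpos]

include hr hsum in
lemma Fcode_rec (s : ℕ → Fin 3) :
    Fcode r s = alphaOf r (s 0) + r (s 0) * Fcode r (fun k => s (k + 1)) := by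
  have hs := summable_Fcode hr hsum s
  rw [Fcode, Summable.tsum_eq_zero_add hs]
  simp only [Finset.range_zero, Finset.prod_empty, one_mul]
  congr 1
  rw [Fcode, ← tsum_mul_left]
  refine tsum_congr fun n => ?_
  rw [Finset.prod_range_succ']
  ring

end basic

noncomputable def qF (r : Fin 3 → ℝ) (ε : ℤ → Fin 3) : ℝ := Fcode r (fun k : ℕ => ε (k : ℤ))
noncomputable def pF (r : Fin 3 → ℝ) (ε : ℤ → Fin 3) : ℝ := Fcode r (fun k : ℕ => ε (-(k + 1) : ℤ))
lemma coding_eq (r : Fin 3 → ℝ) (ε : ℤ → Fin 3) : codingMap r ε = (qF r ε, pF r ε) := rfl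

-- placeholders so this file is standalone for testing


section twosided
variable {r : Fin 3 → ℝ} (hr : ∀ i, 0 < r i) (hsum : r 0 + r 1 + r 2 = 1)

include hr hsum in
lemma q_rec (ε : ℤ → Fin 3) :
    qF r ε = alphaOf r (ε 0) + r (ε 0) * qF r (shiftMap ε) := by
  have h := Fcode_rec hr hsum (fun k : ℕ => ε (k : ℤ))
  have he : (fun k : ℕ => ε ((k + 1 : ℕ) : ℤ)) = (fun k : ℕ => shiftMap ε (k : ℤ)) := by
    funext k; show ε _ = ε _; congr 1 <;> omega
  rw [he] at h
  rw [qF, h, ← qF]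
  norm_num

include hr hsum in
lemma p_rec (ε : ℤ → Fin 3) :
    pF r (shiftMap ε) = alphaOf r (ε 0) + r (ε 0) * pF r ε := by
  have h := Fcode_rec hr hsum (fun k : ℕ => ε (-(k : ℤ)))
  have h0 : (fun k : ℕ => shiftMap ε (-(k + 1) : ℤ)) = (fun k : ℕ => ε (-(k : ℤ))) := by
    funext k; show ε _ = ε _; congr 1 <;> omega
  have h1 : (fun k : ℕ => ε (-((k + 1 : ℕ) : ℤ))) = (fun k : ℕ => ε (-(k + 1) : ℤ)) := by
    funext k; congr 1 <;> omega
  rw [h1] at h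
  rw [pF, h0, h, ← pF]
  norm_num

include hr hsum in
lemma qshift_lt_one {ε : ℤ → Fin 3} (h : ∃ k : ℤ, 1 ≤ k ∧ ε k ≠ 2) :
    qF r (shiftMap ε) < 1 := by
  obtain ⟨m, hm1, hm2⟩ := h
  refine Fcode_lt_one hr hsum (s := fun k : ℕ => shiftMap ε (k : ℤ)) (m := (m - 1).toNat) ?_
  show ε _ ≠ 2
  convert hm2 using 2
  omega

include hr hsum in
lemma p_lt_one {ε : ℤ → Fin 3} (h : ∃ n : ℤ, n ≤ -1 ∧ ε n ≠ 2) : pF r ε < 1 := by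
  obtain ⟨m, hm1, hm2⟩ := h
  refine Fcode_lt_one hr hsum (s := fun k : ℕ => ε (-(k + 1) : ℤ)) (m := (-m - 1).toNat) ?_
  show ε _ ≠ 2
  convert hm2 using 2
  omega

end twosided







section geom
variable {r : Fin 3 → ℝ} (hr : ∀ i, 0 < r i) (hsum : r 0 + r 1 + r 2 = 1)

include hr hsum in
lemma baker_coding {ε : ℤ → Fin 3} (hqs : qF r (shiftMap ε) < 1) :
    bakerMap r (codingMap r ε) = codingMap r (shiftMap ε) := by
  have h0 := hr 0; have h1 := hr 1; have h2 := hr 2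
  have hq := q_rec hr hsum ε
  have hp := p_rec hr hsum ε
  have hqs0 : 0 ≤ qF r (shiftMap ε) := Fcode_nonneg hr _
  rw [coding_eq, coding_eq]
  rcases fin3_cases (ε 0) with h | h | h <;> rw [h] at hq hp <;>
    simp only [alpha_zero, alpha_one, alpha_two] at hq hp
  · rw [bakerMap, if_pos (by simp only; nlinarith)]
    simp only [Prod.mk.injEq]
    constructor
    · rw [hq]; field_simp; ring
    · linarith
  · rw [bakerMap, if_neg (by simp only; nlinarith), if_pos (by simp only; nlinarith)]
    simp only [Prod.mk.injEq]
    constructor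
    · rw [hq]; field_simp; ring
    · linarith
  · rw [bakerMap, if_neg (by simp only; nlinarith), if_neg (by simp only; nlinarith)]
    simp only [Prod.mk.injEq]
    constructor
    · rw [hq]; field_simp; ring
    · linarith

include hr hsum in
lemma mem_square {ε : ℤ → Fin 3} (hqs : qF r (shiftMap ε) < 1) (hps : pF r ε < 1) :
    codingMap r ε ∈ unitSquare := by
  have hq := q_rec hr hsum ε
  have hqs0 : 0 ≤ qF r (shiftMap ε) := Fcode_nonneg hr _
  have hq0 : 0 ≤ qF r ε := Fcode_nonneg hr _
  have hp0 : 0 ≤ pF r ε := Fcode_nonneg hr _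
  have he := hr (ε 0)
  have ha1 : alphaOf r (ε 0) + r (ε 0) ≤ 1 := by
    have h0 := hr 0; have h1 := hr 1; have h2 := hr 2
    rcases fin3_cases (ε 0) with h | h | h <;> rw [h] <;>
      simp only [alpha_zero, alpha_one, alpha_two] <;> linarith
  have hq1 : qF r ε < 1 := by nlinarith
  rw [coding_eq]
  exact ⟨⟨hq0, hq1⟩, ⟨hp0, hps⟩⟩

include hr hsum in
lemma mem_hole_iff {ε : ℤ → Fin 3} (hqs : qF r (shiftMap ε) < 1) (hps : pF r ε < 1) :
    codingMap r ε ∈ bakerHole r ↔ ε 0 = 1 := by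
  have h0 := hr 0; have h1 := hr 1; have h2 := hr 2
  have hq := q_rec hr hsum ε
  have hqs0 : 0 ≤ qF r (shiftMap ε) := Fcode_nonneg hr _
  have hp0 : 0 ≤ pF r ε := Fcode_nonneg hr _
  have h12 : 1 - r 2 = r 0 + r 1 := by linarith
  rw [coding_eq]
  constructor
  · rintro ⟨⟨ha, hb⟩, -⟩
    rw [h12] at hb
    simp only at ha hb
    rcases fin3_cases (ε 0) with h | h | h <;> rw [h] at hq <;>
      simp only [alpha_zero, alpha_one, alpha_two] at hq
    · exact absurd ha (by nlinarith)
    · exact h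
    · exact absurd hb (by nlinarith)
  · intro h
    rw [h] at hq
    simp only [alpha_one] at hq
    refine ⟨⟨by simp only; nlinarith, ?_⟩, ⟨hp0, hps⟩⟩
    simp only
    rw [h12]
    nlinarith

end geom

lemma measurable_shiftMap : Measurable shiftMap :=
  measurable_pi_lambda _ fun n => measurable_pi_apply _

lemma measurable_tsum_code {r : Fin 3 → ℝ} (hr : ∀ i, 0 < r i) (hsum : r 0 + r 1 + r 2 = 1)
    (g : ℕ → ℤ) :
    Measurable (fun ε : ℤ → Fin 3 =>
      ∑' k : ℕ, (∏ i ∈ Finset.range k, r (ε (g i))) * alphaOf r (ε (g k))) := by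
  have hterm : ∀ k : ℕ, Measurable (fun ε : ℤ → Fin 3 =>
      (∏ i ∈ Finset.range k, r (ε (g i))) * alphaOf r (ε (g k))) := by
    intro k
    refine Measurable.mul ?_ ?_
    · exact Finset.measurable_prod _ fun i _ =>
        (measurable_of_countable r).comp (measurable_pi_apply _)
    · exact (measurable_of_countable (alphaOf r)).comp (measurable_pi_apply _)
  refine measurable_of_tendsto_metrizable
    (f := fun n ε => ∑ k ∈ Finset.range n, (∏ i ∈ Finset.range k, r (ε (g i))) * alphaOf r (ε (g k)))
    (fun n => Finset.measurable_sum _ fun k _ => hterm k) ?_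
  rw [tendsto_pi_nhds]
  intro ε
  exact (summable_Fcode hr hsum (fun k => ε (g k))).hasSum.tendsto_sum_nat

lemma measurable_codingMap {r : Fin 3 → ℝ} (hr : ∀ i, 0 < r i) (hsum : r 0 + r 1 + r 2 = 1) :
    Measurable (codingMap r) := by
  refine Measurable.prodMk ?_ ?_
  · exact measurable_tsum_code hr hsum (fun i => (i : ℤ))
  · exact measurable_tsum_code hr hsum (fun i => (-(i + 1) : ℤ))

lemma measurable_bakerMap (r : Fin 3 → ℝ) : Measurable (bakerMap r) := by
  unfold bakerMap
  refine Measurable.ite (measurableSet_lt measurable_fst measurable_const) ?_ ?_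
  · exact ((measurable_fst.div_const _).prodMk (measurable_snd.const_mul _))
  refine Measurable.ite (measurableSet_lt measurable_fst measurable_const) ?_ ?_
  · exact (((measurable_fst.sub_const _).div_const _).prodMk
      ((measurable_snd.const_mul _).add_const _))
  · exact (((measurable_fst.sub_const _).div_const _).prodMk
      ((measurable_snd.const_mul _).add_const _))

/-- If `μ^Σ` is an eigenmeasure of the open shift with decay rate `Λ`
which charges neither `Σ \ Σ''` nor `{ε : ε_n = 2 for all n ≤ -1}`, then its push-forward
under `J_r` is a probability measure on `[0,1)²` and an eigenmeasure of the open baker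
`B_r` with decay rate `Λ`. -/
theorem pushforward_of_openShift_eigenmeasure
    (r : Fin 3 → ℝ) (hr : ∀ i, 0 < r i) (hsum : r 0 + r 1 + r 2 = 1)
    (muS : Measure (ℤ → Fin 3)) [IsProbabilityMeasure muS]
    (Λ : ℝ≥0∞)
    (heig : ∀ S : Set (ℤ → Fin 3), MeasurableSet S →
      muS (shiftMap ⁻¹' S ∩ {ε | ε 0 ≠ 1}) = Λ * muS S)
    (hbad : muS badSet = 0)
    (htail : muS {ε | ∀ n : ℤ, n ≤ -1 → ε n = 2} = 0) :
    IsProbabilityMeasure (muS.map (codingMap r)) ∧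
    (muS.map (codingMap r)) unitSquare = 1 ∧
    ∀ S : Set (ℝ × ℝ), MeasurableSet S →
      (muS.map (codingMap r)) (bakerMap r ⁻¹' S ∩ (unitSquare \ bakerHole r))
        = Λ * (muS.map (codingMap r)) S := by

  have hJ : Measurable (codingMap r) := measurable_codingMap hr hsum
  have hB : Measurable (bakerMap r) := measurable_bakerMap r
  have hsq : MeasurableSet unitSquare := measurableSet_Ico.prod measurableSet_Ico
  have hhole : MeasurableSet (bakerHole r) := measurableSet_Ico.prod measurableSet_Ico
  set G : Set (ℤ → Fin 3) :=
    {ε | (∃ k : ℤ, 1 ≤ k ∧ ε k ≠ 2) ∧ (∃ n : ℤ, n ≤ -1 ∧ ε n ≠ 2)} with hGdef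
  have hGc : muS Gᶜ = 0 := by
    have hsub : Gᶜ ⊆ badSet ∪ {ε | ∀ n : ℤ, n ≤ -1 → ε n = 2} := by
      intro ε hε
      simp only [hGdef, Set.mem_compl_iff, Set.mem_setOf_eq, not_and_or, not_exists] at hε
      rcases hε with h | h
      · left; right
        intro n hn
        by_contra hc
        rcases h n with h' | h' <;> tauto
      · right
        intro n hn
        by_contra hc
        rcases h n with h' | h' <;> tauto
    exact measure_mono_null hsub (measure_union_null hbad htail)
  have hGfacts : ∀ ε ∈ G, codingMap r ε ∈ unitSquare ∧
      (codingMap r ε ∈ bakerHole r ↔ ε 0 = 1) ∧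
      bakerMap r (codingMap r ε) = codingMap r (shiftMap ε) := by
    intro ε hε
    have hqs := qshift_lt_one hr hsum hε.1
    have hps := p_lt_one hr hsum hε.2
    exact ⟨mem_square hr hsum hqs hps, mem_hole_iff hr hsum hqs hps,
      baker_coding hr hsum hqs⟩
  refine ⟨Measure.isProbabilityMeasure_map hJ.aemeasurable, ?_, ?_⟩
  · rw [Measure.map_apply hJ hsq]
    refine le_antisymm prob_le_one ?_
    have hsubset : G ⊆ codingMap r ⁻¹' unitSquare := fun ε hε => (hGfacts ε hε).1
    calc (1 : ℝ≥0∞) = muS Set.univ := (measure_univ).symm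
      _ ≤ muS (codingMap r ⁻¹' unitSquare ∪ Gᶜ) := by
          refine measure_mono fun ε _ => ?_
          by_cases h : ε ∈ G
          · exact Or.inl (hsubset h)
          · exact Or.inr h
      _ ≤ muS (codingMap r ⁻¹' unitSquare) + muS Gᶜ := measure_union_le _ _
      _ = muS (codingMap r ⁻¹' unitSquare) := by rw [hGc, add_zero]
  · intro S hS
    rw [Measure.map_apply hJ ((hB hS).inter (hsq.diff hhole)),
      Measure.map_apply hJ hS]
    have key : codingMap r ⁻¹' (bakerMap r ⁻¹' S ∩ (unitSquare \ bakerHole r)) ∩ G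
        = (shiftMap ⁻¹' (codingMap r ⁻¹' S) ∩ {ε | ε 0 ≠ 1}) ∩ G := by
      ext ε
      simp only [Set.mem_inter_iff]
      refine and_congr_left fun hG => ?_
      obtain ⟨hmem, hhiff, hcomm⟩ := hGfacts ε hG
      simp only [Set.mem_preimage, Set.mem_inter_iff, Set.mem_diff, Set.mem_setOf_eq,
        hcomm, hhiff]
      tauto
    calc muS (codingMap r ⁻¹' (bakerMap r ⁻¹' S ∩ (unitSquare \ bakerHole r)))
        = muS (codingMap r ⁻¹' (bakerMap r ⁻¹' S ∩ (unitSquare \ bakerHole r)) ∩ G) :=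
          (measure_inter_conull hGc).symm
      _ = muS ((shiftMap ⁻¹' (codingMap r ⁻¹' S) ∩ {ε | ε 0 ≠ 1}) ∩ G) := by rw [key]
      _ = muS (shiftMap ⁻¹' (codingMap r ⁻¹' S) ∩ {ε | ε 0 ≠ 1}) :=
          measure_inter_conull hGc
      _ = Λ * muS (codingMap r ⁻¹' S) := heig _ (hJ hS)
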